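/- Let n ≥ 1 and set r = 2n. Let C, F ∈ ℝ[x,y] be homogeneous polynomials of degrees n and n+1 respectively, and suppose there exist A, B, D, E ∈ ℝ[x,y] such that B·F − E·C = x^{2n+1} and A·F − D·C = (x+y)^{2n+1}. Let C' = C(z,y) and F' = F(z,y) be obtained from C, F by substituting z for x. Then there exist natural numbers u, v with u+v = 2n−1 = r−1 such that the monomial x^u y^v does not belong to the ideal ⟨C, F, C', F'⟩ of ℝ[x,y,z]; in particular the degree-(r−1) homogeneous component of ℝ[x,y,z]/⟨C, F, C', F'⟩ is nonzero. -/

import Mathlib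

open MvPolynomial

/-- The inclusion `ℝ[x,y] ⊆ ℝ[x,y,z]`, sending `x ↦ x`, `y ↦ y`. -/
noncomputable def inclXY : MvPolynomial (Fin 2) ℝ →ₐ[ℝ] MvPolynomial (Fin 3) ℝ :=
  rename ![0, 1]

/-- The map `ℝ[x,y] → ℝ[x,y,z]` given by `p(x,y) ↦ p(z,y)`, i.e. sending
`x ↦ z`, `y ↦ y`. -/
noncomputable def substZforX : MvPolynomial (Fin 2) ℝ →ₐ[ℝ] MvPolynomial (Fin 3) ℝ :=
  rename ![2, 1]


/-- The retraction `ℝ[x,y,z] → ℝ[x,y]` sending `x ↦ x`, `y ↦ y`, `z ↦ x`. -/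
noncomputable def collapseZ : MvPolynomial (Fin 3) ℝ →ₐ[ℝ] MvPolynomial (Fin 2) ℝ :=
  rename ![0, 1, 0]

lemma collapseZ_inclXY (p : MvPolynomial (Fin 2) ℝ) : collapseZ (inclXY p) = p := by
  rw [collapseZ, inclXY, rename_rename]
  have : (![0, 1, 0] ∘ ![0, 1] : Fin 2 → Fin 2) = id := by
    funext i; fin_cases i <;> rfl
  rw [this, rename_id, AlgHom.id_apply]

lemma collapseZ_substZforX (p : MvPolynomial (Fin 2) ℝ) : collapseZ (substZforX p) = p := by
  rw [collapseZ, substZforX, rename_rename]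
  have : (![0, 1, 0] ∘ ![2, 1] : Fin 2 → Fin 2) = id := by
    funext i; fin_cases i <;> rfl
  rw [this, rename_id, AlgHom.id_apply]

lemma homog_decomp (d m : ℕ) {G : MvPolynomial (Fin 2) ℝ} (hG : G.IsHomogeneous m)
    (p : MvPolynomial (Fin 2) ℝ) :
    ∃ q : MvPolynomial (Fin 2) ℝ, q.IsHomogeneous (d - m) ∧ (m ≤ d ∨ q = 0) ∧
      homogeneousComponent d (p * G) = q * G := by
  have key : ∀ i : ℕ, homogeneousComponent d (homogeneousComponent i p * G)
      = if i = d - m ∧ m ≤ d then homogeneousComponent i p * G else 0 := by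
    intro i
    rw [homogeneousComponent_of_mem
      ((mem_homogeneousSubmodule _ _).2 ((homogeneousComponent_isHomogeneous i p).mul hG))]
    exact if_congr (by omega) rfl rfl
  have hsum : homogeneousComponent d (p * G)
      = ∑ i ∈ Finset.range (p.totalDegree + 1),
          homogeneousComponent d (homogeneousComponent i p * G) := by
    conv_lhs => rw [← sum_homogeneousComponent p]
    rw [Finset.sum_mul, map_sum]
  by_cases hmd : m ≤ d
  · refine ⟨homogeneousComponent (d - m) p,
      homogeneousComponent_isHomogeneous _ p, Or.inl hmd, ?_⟩
    rw [hsum]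
    simp_rw [key, and_iff_left hmd]
    rw [Finset.sum_ite_eq' (Finset.range (p.totalDegree + 1))
      (d - m) (fun i => homogeneousComponent i p * G)]
    split_ifs with h
    · rfl
    · rw [homogeneousComponent_eq_zero _ p (by simp at h; omega), zero_mul]
  · refine ⟨0, isHomogeneous_zero _ _ _, Or.inr rfl, ?_⟩
    rw [hsum, zero_mul]
    apply Finset.sum_eq_zero
    intro i _
    rw [key, if_neg (by omega)]

noncomputable def psiXY : MvPolynomial (Fin 2) ℝ →ₐ[ℝ] Polynomial ℝ :=
  aeval ![Polynomial.X, 1]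

lemma psiXY_mem_degreeLT {e : ℕ} {p : MvPolynomial (Fin 2) ℝ} (hp : p.IsHomogeneous e) :
    psiXY p ∈ Polynomial.degreeLT ℝ (e + 1) := by
  rw [p.as_sum, map_sum]
  apply Submodule.sum_mem
  intro a ha
  rw [psiXY, aeval_monomial, Finsupp.prod_fintype _ _ (fun i => pow_zero _),
    Fin.prod_univ_two]
  simp only [Matrix.cons_val_zero, Matrix.cons_val_one, Matrix.head_cons, one_pow, mul_one]
  rw [Polynomial.mem_degreeLT]
  calc Polynomial.degree ((algebraMap ℝ (Polynomial ℝ)) (coeff a p) * Polynomial.X ^ (a 0))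
      ≤ (a 0 : WithBot ℕ) := by
        rw [← Polynomial.C_eq_algebraMap, Polynomial.C_mul_X_pow_eq_monomial]
        exact Polynomial.degree_monomial_le _ _
    _ < ((e + 1 : ℕ) : WithBot ℕ) := by
        have h1 : a 0 ≤ e := by
          have h0 := hp (mem_support_iff.mp ha)
          replace h0 : a.degree = e := by rw [Finsupp.degree_eq_weight_one]; exact h0
          have h2 : a 0 ≤ a.degree := Finsupp.le_degree 0 a
          omega
        exact_mod_cast Nat.lt_succ_of_le h1

lemma count_lemma (n : ℕ) (hn : 1 ≤ n) (c f : Polynomial ℝ)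
    (h : ∀ u : ℕ, u < 2 * n → ∃ a ∈ Polynomial.degreeLT ℝ n,
        ∃ b ∈ Polynomial.degreeLT ℝ (n - 1),
        (Polynomial.X : Polynomial ℝ) ^ u = a * c + b * f) : False := by
  classical
  let T : (Polynomial.degreeLT ℝ n × Polynomial.degreeLT ℝ (n - 1)) →ₗ[ℝ] Polynomial ℝ :=
    { toFun := fun ab => ab.1.1 * c + ab.2.1 * f
      map_add' := by
        rintro ⟨⟨a, _⟩, ⟨b, _⟩⟩ ⟨⟨a', _⟩, ⟨b', _⟩⟩
        simp only [Prod.fst_add, Prod.snd_add, Submodule.coe_add]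
        ring
      map_smul' := by
        rintro r ⟨⟨a, _⟩, ⟨b, _⟩⟩
        simp only [Prod.smul_fst, Prod.smul_snd, SetLike.val_smul, smul_eq_mul,
          RingHom.id_apply, smul_add, smul_mul_assoc] }
  haveI : Module.Finite ℝ (Polynomial.degreeLT ℝ n) :=
    Module.Finite.equiv (Polynomial.degreeLTEquiv ℝ n).symm
  haveI : Module.Finite ℝ (Polynomial.degreeLT ℝ (n - 1)) :=
    Module.Finite.equiv (Polynomial.degreeLTEquiv ℝ (n - 1)).symm
  haveI : Module.Finite ℝ (Polynomial.degreeLT ℝ n × Polynomial.degreeLT ℝ (n - 1)) :=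
    Module.Finite.prod
  have hrange : ∀ u : Fin (2 * n), (Polynomial.X : Polynomial ℝ) ^ (u : ℕ) ∈
      LinearMap.range T := by
    rintro ⟨u, hu⟩
    obtain ⟨a, ha, b, hb, hab⟩ := h u hu
    exact ⟨(⟨a, ha⟩, ⟨b, hb⟩), hab.symm⟩
  let w : Fin (2 * n) → LinearMap.range T := fun u => ⟨Polynomial.X ^ (u : ℕ), hrange u⟩
  have hw : LinearIndependent ℝ w := by
    apply LinearIndependent.of_comp (LinearMap.range T).subtype
    have h2 := (Polynomial.basisMonomials ℝ).linearIndependent.comp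
      (fun i : Fin (2 * n) => (i : ℕ)) Fin.val_injective
    convert h2 using 1
    funext j
    simp only [Function.comp_apply, Submodule.coe_subtype, w,
      Polynomial.coe_basisMonomials, Polynomial.X_pow_eq_monomial]
  haveI : Module.Finite ℝ (LinearMap.range T) := Module.Finite.range T
  have hcard : 2 * n ≤ Module.finrank ℝ (LinearMap.range T) := by
    simpa using hw.fintype_card_le_finrank
  have hle : Module.finrank ℝ (LinearMap.range T) ≤ n + (n - 1) := by
    refine le_trans (LinearMap.finrank_range_le T) ?_
    rw [Module.finrank_prod, (Polynomial.degreeLTEquiv ℝ n).finrank_eq,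
      (Polynomial.degreeLTEquiv ℝ (n - 1)).finrank_eq, Module.finrank_pi, Module.finrank_pi]
    simp
  omega

lemma key_two_var (n : ℕ) (hn : 1 ≤ n) (C F : MvPolynomial (Fin 2) ℝ)
    (hCh : C.IsHomogeneous n) (hFh : F.IsHomogeneous (n + 1)) :
    ∃ u v : ℕ, u + v = 2 * n - 1 ∧
      (X 0 ^ u * X 1 ^ v : MvPolynomial (Fin 2) ℝ) ∉ Ideal.span {C, F} := by
  by_contra hcon
  push_neg at hcon
  apply count_lemma n hn (psiXY C) (psiXY F)
  intro u hu
  set v := 2 * n - 1 - u with hv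
  have hsum : u + v = 2 * n - 1 := by omega
  have hmem := hcon u v hsum
  rw [Ideal.mem_span_pair] at hmem
  obtain ⟨p, q, hpq⟩ := hmem
  obtain ⟨p', hp', _, hpC⟩ := homog_decomp (2 * n - 1) n hCh p
  obtain ⟨q', hq', hq0, hqF⟩ := homog_decomp (2 * n - 1) (n + 1) hFh q
  have hmon : (X 0 ^ u * X 1 ^ (v) : MvPolynomial (Fin 2) ℝ).IsHomogeneous
      (2 * n - 1) := by
    have := ((isHomogeneous_X ℝ (0 : Fin 2)).pow u).mul ((isHomogeneous_X ℝ (1 : Fin 2)).pow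
      (v))
    have h7 : (X 0 ^ u * X 1 ^ (v) : MvPolynomial (Fin 2) ℝ).IsHomogeneous
        (u + (v)) := by simpa using this
    exact hsum ▸ h7
  have heq : p' * C + q' * F = X 0 ^ u * X 1 ^ (v) := by
    have h3 := congrArg (homogeneousComponent (2 * n - 1)) hpq
    rw [map_add, hpC, hqF,
      homogeneousComponent_of_mem ((mem_homogeneousSubmodule _ _).2 hmon), if_pos rfl] at h3
    exact h3
  refine ⟨psiXY p', ?_, psiXY q', ?_, ?_⟩
  · have h4 := psiXY_mem_degreeLT hp'
    have h5 : 2 * n - 1 - n + 1 ≤ n := by omega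
    exact Polynomial.degreeLT_mono h5 h4
  · rcases hq0 with hle | hz
    · have h4 := psiXY_mem_degreeLT hq'
      have h5 : 2 * n - 1 - (n + 1) + 1 ≤ n - 1 := by omega
      exact Polynomial.degreeLT_mono h5 h4
    · rw [hz, map_zero]; exact Submodule.zero_mem _
  · have h6 := congrArg psiXY heq
    rw [map_add, map_mul, map_mul] at h6
    have hx : psiXY (X 0 ^ u * X 1 ^ (v) : MvPolynomial (Fin 2) ℝ)
        = Polynomial.X ^ u := by
      rw [map_mul, map_pow, map_pow, psiXY, aeval_X, aeval_X]
      simp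
    rw [hx] at h6
    exact h6.symm

/-- odd case `r + 1 = 2n + 1`.  Let `n ≥ 1`, `r = 2n`, and let
`C, F ∈ ℝ[x,y]` be homogeneous of degrees `n` and `n+1` with `B·F − E·C = x^(2n+1)`
and `A·F − D·C = (x+y)^(2n+1)` for some `A, B, D, E`.  With `C' = C(z,y)`,
`F' = F(z,y)`, there are `u, v` with `u + v = 2n − 1 = r − 1` such that
`x^u y^v ∉ ⟨C, F, C', F'⟩` in `ℝ[x,y,z]`; in particular the degree-`(r−1)`
homogeneous component of `ℝ[x,y,z]/⟨C, F, C', F'⟩` is nonzero. -/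
theorem monomial_not_mem_odd_case (n r : ℕ) (hn : 1 ≤ n) (hr : r = 2 * n)
    (C F : MvPolynomial (Fin 2) ℝ)
    (hCh : C.IsHomogeneous n) (hFh : F.IsHomogeneous (n + 1))
    (A B D E : MvPolynomial (Fin 2) ℝ)
    (h1 : B * F - E * C = X 0 ^ (2 * n + 1))
    (h2 : A * F - D * C = (X 0 + X 1) ^ (2 * n + 1)) :
    (∃ u v : ℕ, u + v = 2 * n - 1 ∧
        (X 0 ^ u * X 1 ^ v : MvPolynomial (Fin 3) ℝ) ∉
          (Ideal.span {inclXY C, inclXY F, substZforX C, substZforX F} :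
            Ideal (MvPolynomial (Fin 3) ℝ))) ∧
      Nontrivial
        (↥(homogeneousSubmodule (Fin 3) ℝ (r - 1)) ⧸
          Submodule.comap (homogeneousSubmodule (Fin 3) ℝ (r - 1)).subtype
            (Submodule.restrictScalars ℝ
              (Ideal.span {inclXY C, inclXY F, substZforX C, substZforX F} :
                Ideal (MvPolynomial (Fin 3) ℝ)))) := by
  obtain ⟨u, v, huv, hnot2⟩ := key_two_var n hn C F hCh hFh
  have hnot : (X 0 ^ u * X 1 ^ v : MvPolynomial (Fin 3) ℝ) ∉
      (Ideal.span {inclXY C, inclXY F, substZforX C, substZforX F} :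
        Ideal (MvPolynomial (Fin 3) ℝ)) := by
    intro hmem
    apply hnot2
    have hle : (Ideal.span {inclXY C, inclXY F, substZforX C, substZforX F} :
        Ideal (MvPolynomial (Fin 3) ℝ)) ≤
        Ideal.comap (collapseZ : MvPolynomial (Fin 3) ℝ →ₐ[ℝ] MvPolynomial (Fin 2) ℝ)
          (Ideal.span {C, F}) := by
      rw [Ideal.span_le]
      intro g hg
      simp only [Set.mem_insert_iff, Set.mem_singleton_iff] at hg
      rcases hg with rfl | rfl | rfl | rfl <;>
        simp only [SetLike.mem_coe, Ideal.mem_comap, AlgHom.toRingHom_eq_coe,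
          RingHom.coe_coe, collapseZ_inclXY, collapseZ_substZforX] <;>
        exact Ideal.subset_span (by simp)
    have h3 := hle hmem
    rw [Ideal.mem_comap] at h3
    have h4 : collapseZ (X 0 ^ u * X 1 ^ v : MvPolynomial (Fin 3) ℝ)
        = (X 0 ^ u * X 1 ^ v : MvPolynomial (Fin 2) ℝ) := by
      rw [map_mul, map_pow, map_pow, collapseZ, rename_X, rename_X]
      simp
    rwa [h4] at h3
  have hmem3 : (X 0 ^ u * X 1 ^ v : MvPolynomial (Fin 3) ℝ) ∈
      homogeneousSubmodule (Fin 3) ℝ (r - 1) := by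
    rw [mem_homogeneousSubmodule]
    have h5 := ((isHomogeneous_X ℝ (0 : Fin 3)).pow u).mul ((isHomogeneous_X ℝ (1 : Fin 3)).pow v)
    have h7 : (X 0 ^ u * X 1 ^ v : MvPolynomial (Fin 3) ℝ).IsHomogeneous (u + v) := by
      simpa using h5
    have h8 : u + v = r - 1 := by omega
    exact h8 ▸ h7
  refine ⟨⟨u, v, huv, hnot⟩, ?_⟩
  refine ⟨Submodule.Quotient.mk ⟨_, hmem3⟩, 0, ?_⟩
  intro h
  rw [Submodule.Quotient.mk_eq_zero] at h
  simp only [Submodule.mem_comap, Submodule.coe_subtype, Submodule.restrictScalars_mem] at h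
  exact hnot h
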